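/- For the α-skew random walk, the n-step distribution satisfies: P(S^{(α)}_k = m) = α·P(|S_k| = m) for m > 0, P(S^{(α)}_k = m) = (1−α)·P(|S_k| = −m) for m < 0, and P(S^{(α)}_k = 0) = P(S_k = 0), where S is the simple symmetric random walk started at 0. -/

import Mathlib

open MeasureTheory

/-- One-step transition probability of the α-skew random walk. -/
noncomputable def stepP (α : ℝ) (m m' : ℤ) : ℝ :=
  if m' = m + 1 then (if m = 0 then α else 1/2)
  else if m' = m - 1 then (if m = 0 then 1 - α else 1/2)
  else 0

/-- `S` is an α-skew random walk started at `0` under the probability measure `P`: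
its finite-dimensional distributions are given by the product of the one-step
transition probabilities, with initial state `0`. -/
def IsSkewRW (α : ℝ) {Ω : Type*} [MeasurableSpace Ω] (P : Measure Ω)
    (S : ℕ → Ω → ℤ) : Prop :=
  IsProbabilityMeasure P ∧ (∀ k, Measurable (S k)) ∧
  ∀ (n : ℕ) (path : ℕ → ℤ),
    P {ω | ∀ k ≤ n, S k ω = path k} =
      ENNReal.ofReal ((if path 0 = 0 then 1 else 0) *
        ∏ k ∈ Finset.range n, stepP α (path k) (path (k + 1)))

/-- Return probabilities of the simple symmetric random walk. -/
noncomputable def gfun (k : ℕ) : ℝ :=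
  if Even k then (Nat.choose k (k / 2) : ℝ) / 2 ^ k else 0

lemma stepP_nonneg {α : ℝ} (h0 : 0 ≤ α) (h1 : α ≤ 1) (a b : ℤ) : 0 ≤ stepP α a b := by
  unfold stepP; split_ifs <;> linarith

noncomputable def wt (α : ℝ) (n : ℕ) (p : Fin (n+1) → ℤ) : ℝ :=
  (if p 0 = 0 then 1 else 0) * ∏ j : Fin n, stepP α (p j.castSucc) (p j.succ)

lemma wt_nonneg {α : ℝ} (h0 : 0 ≤ α) (h1 : α ≤ 1) (n : ℕ) (p : Fin (n+1) → ℤ) :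
    0 ≤ wt α n p := by
  unfold wt
  apply mul_nonneg
  · split_ifs <;> norm_num
  · exact Finset.prod_nonneg fun j _ => stepP_nonneg h0 h1 _ _

def pe (n : ℕ) : (Fin (n+2) → ℤ) ≃ (Fin (n+1) → ℤ) × ℤ where
  toFun p := (Fin.init p, p (Fin.last _))
  invFun q := Fin.snoc q.1 q.2
  left_inv p := Fin.snoc_init_self p
  right_inv q := by
    refine Prod.ext ?_ ?_ <;> simp

lemma wt_snoc (α : ℝ) (n : ℕ) (q : Fin (n+1) → ℤ) (x : ℤ) :
    wt α (n+1) (Fin.snoc q x) = wt α n q * stepP α (q (Fin.last n)) x := by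
  have h0 : (Fin.snoc q x : Fin (n+2) → ℤ) 0 = q 0 := by
    rw [show (0 : Fin (n+2)) = Fin.castSucc 0 from rfl, Fin.snoc_castSucc]
  simp only [wt, Fin.prod_univ_castSucc, h0]
  rw [Fin.succ_last, Fin.snoc_last, Fin.snoc_castSucc]
  rw [Finset.prod_congr rfl (fun i _ => ?_), mul_assoc]
  rw [Fin.succ_castSucc, Fin.snoc_castSucc, Fin.snoc_castSucc]

noncomputable def F (α : ℝ) : ℕ → ℤ → ℝ
  | 0, m => if m = 0 then 1 else 0
  | (k+1), m => F α k (m-1) * (if m - 1 = 0 then α else 1/2)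
      + F α k (m+1) * (if m + 1 = 0 then 1 - α else 1/2)

lemma F_nonneg {α : ℝ} (h0 : 0 ≤ α) (h1 : α ≤ 1) : ∀ k m, 0 ≤ F α k m := by
  intro k
  induction k with
  | zero => intro m; simp only [F]; split_ifs <;> norm_num
  | succ k ih =>
    intro m
    simp only [F]
    have := ih (m-1); have := ih (m+1)
    apply add_nonneg <;> apply mul_nonneg <;> first | assumption | (split_ifs <;> linarith)

lemma tsum_wt {α : ℝ} (h0 : 0 ≤ α) (h1 : α ≤ 1) :
    ∀ (n : ℕ) (m : ℤ),
      (∑' p : Fin (n+1) → ℤ,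
        (if p (Fin.last n) = m then ENNReal.ofReal (wt α n p) else 0))
      = ENNReal.ofReal (F α n m) := by
  intro n
  induction n with
  | zero =>
    intro m
    rw [tsum_eq_single (fun _ => m) ?_]
    · simp [wt, F]
    · intro p hp
      rw [if_neg]
      intro h
      exact hp (funext fun j => by rw [Fin.fin_one_eq_zero j]; exact h)
  | succ n ih =>
    intro m
    have key := ((pe n).symm).tsum_eq
      (fun p => if p (Fin.last (n+1)) = m then ENNReal.ofReal (wt α (n+1) p) else 0)
    rw [← key, ENNReal.tsum_prod']
    have hsnoc : ∀ (q : Fin (n+1) → ℤ) (x : ℤ),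
        (pe n).symm (q, x) = Fin.snoc q x := fun _ _ => rfl
    have inner : ∀ q : Fin (n+1) → ℤ,
        (∑' x : ℤ, (if ((pe n).symm (q, x)) (Fin.last (n+1)) = m then
            ENNReal.ofReal (wt α (n+1) ((pe n).symm (q, x))) else 0))
          = ENNReal.ofReal (wt α n q * stepP α (q (Fin.last n)) m) := by
      intro q
      rw [tsum_eq_single m ?_]
      · rw [hsnoc, Fin.snoc_last, if_pos rfl, wt_snoc]
      · intro x hx
        rw [hsnoc, Fin.snoc_last, if_neg hx]
    rw [tsum_congr inner]
    have hc1 : (0:ℝ) ≤ (if m - 1 = 0 then α else 1/2) := by split_ifs <;> linarith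
    have hc2 : (0:ℝ) ≤ (if m + 1 = 0 then 1 - α else 1/2) := by split_ifs <;> linarith
    have split : ∀ q : Fin (n+1) → ℤ,
        ENNReal.ofReal (wt α n q * stepP α (q (Fin.last n)) m)
        = (if q (Fin.last n) = m - 1 then ENNReal.ofReal (wt α n q) else 0)
            * ENNReal.ofReal (if m - 1 = 0 then α else 1/2)
          + (if q (Fin.last n) = m + 1 then ENNReal.ofReal (wt α n q) else 0)
            * ENNReal.ofReal (if m + 1 = 0 then 1 - α else 1/2) := by
      intro q
      by_cases ha1 : q (Fin.last n) = m - 1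
      · rw [if_pos ha1, if_neg (show ¬ q (Fin.last n) = m + 1 by omega)]
        have hst : stepP α (q (Fin.last n)) m = (if m - 1 = 0 then α else 1/2) := by
          rw [ha1]; unfold stepP; rw [if_pos (by omega)]
        rw [hst, ENNReal.ofReal_mul (wt_nonneg h0 h1 n q), zero_mul, add_zero]
      · by_cases ha2 : q (Fin.last n) = m + 1
        · rw [if_neg ha1, if_pos ha2]
          have hst : stepP α (q (Fin.last n)) m = (if m + 1 = 0 then 1 - α else 1/2) := by
            rw [ha2]; unfold stepP
            rw [if_neg (show ¬ m = m + 1 + 1 by omega), if_pos (show m = m + 1 - 1 by omega)]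
          rw [hst, ENNReal.ofReal_mul (wt_nonneg h0 h1 n q), zero_mul, zero_add]
        · rw [if_neg ha1, if_neg ha2]
          have hst : stepP α (q (Fin.last n)) m = 0 := by
            unfold stepP
            rw [if_neg (show ¬ m = q (Fin.last n) + 1 by omega),
              if_neg (show ¬ m = q (Fin.last n) - 1 by omega)]
          rw [hst, mul_zero, ENNReal.ofReal_zero, zero_mul, zero_mul, add_zero]
    rw [tsum_congr split, ENNReal.tsum_add, ENNReal.tsum_mul_right, ENNReal.tsum_mul_right,
      ih (m-1), ih (m+1), ← ENNReal.ofReal_mul (F_nonneg h0 h1 n (m-1)),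
      ← ENNReal.ofReal_mul (F_nonneg h0 h1 n (m+1)),
      ← ENNReal.ofReal_add (mul_nonneg (F_nonneg h0 h1 n (m-1)) hc1)
        (mul_nonneg (F_nonneg h0 h1 n (m+1)) hc2)]
    rfl

lemma skew_measure {α : ℝ} (h0 : 0 ≤ α) (h1 : α ≤ 1) {Ω : Type*} [MeasurableSpace Ω]
    {P : Measure Ω} {S : ℕ → Ω → ℤ} (h : IsSkewRW α P S) (k : ℕ) (m : ℤ) :
    P {ω | S k ω = m} = ENNReal.ofReal (F α k m) := by
  classical
  obtain ⟨hP, hmeas, hfdd⟩ := h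
  set ext : (Fin (k+1) → ℤ) → ℕ → ℤ :=
    fun p j => if hj : j < k + 1 then p ⟨j, hj⟩ else 0 with hext
  have cylP : ∀ p : Fin (k+1) → ℤ,
      P {ω | ∀ j : Fin (k+1), S j ω = p j} = ENNReal.ofReal (wt α k p) := by
    intro p
    have hset : {ω | ∀ j : Fin (k+1), S j ω = p j} = {ω | ∀ j ≤ k, S j ω = ext p j} := by
      ext ω
      simp only [Set.mem_setOf_eq]
      constructor
      · intro hω j hj
        have h2 := hω ⟨j, Nat.lt_succ_of_le hj⟩
        rw [hext]
        simp only []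
        rw [dif_pos (Nat.lt_succ_of_le hj)]
        exact h2
      · intro hω j
        have h2 := hω j (Nat.lt_succ_iff.mp j.isLt)
        rw [hext] at h2
        simp only [dif_pos j.isLt] at h2
        convert h2 using 2 <;> exact (Fin.eta j j.isLt).symm
    rw [hset, hfdd k (ext p)]
    congr 1
    have he0 : ext p 0 = p 0 := by
      rw [hext]; simp only [dif_pos (Nat.succ_pos k)]; rfl
    rw [he0]
    unfold wt
    congr 1
    rw [← Fin.prod_univ_eq_prod_range (fun j => stepP α (ext p j) (ext p (j+1))) k]
    apply Finset.prod_congr rfl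
    intro i _
    have hi1 : (i : ℕ) < k + 1 := Nat.lt_succ_of_lt i.isLt
    have hi2 : (i : ℕ) + 1 < k + 1 := Nat.succ_lt_succ i.isLt
    rw [hext]
    simp only [dif_pos hi1, dif_pos hi2]
    congr 1
  have hdecomp : {ω | S k ω = m}
      = ⋃ p : {q : Fin (k+1) → ℤ // q (Fin.last k) = m},
          {ω | ∀ j : Fin (k+1), S j ω = p.1 j} := by
    ext ω
    simp only [Set.mem_setOf_eq, Set.mem_iUnion]
    constructor
    · intro hω
      refine ⟨⟨fun j => S j ω, ?_⟩, fun j => rfl⟩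
      simpa using hω
    · rintro ⟨p, hp⟩
      have := hp (Fin.last k)
      rw [p.2] at this
      simpa using this
  have hmeas' : ∀ p : {q : Fin (k+1) → ℤ // q (Fin.last k) = m},
      MeasurableSet {ω | ∀ j : Fin (k+1), S j ω = p.1 j} := by
    intro p
    have : {ω | ∀ j : Fin (k+1), S j ω = p.1 j}
        = ⋂ j : Fin (k+1), (S j) ⁻¹' {p.1 j} := by
      ext ω; simp [Set.mem_iInter]
    rw [this]
    exact MeasurableSet.iInter fun j => (hmeas j) (measurableSet_singleton _)
  have hdisj : Pairwise (Function.onFun Disjoint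
      fun p : {q : Fin (k+1) → ℤ // q (Fin.last k) = m} =>
        {ω | ∀ j : Fin (k+1), S j ω = p.1 j}) := by
    intro p q hpq
    rw [Function.onFun, Set.disjoint_left]
    intro ω hωp hωq
    exact hpq (Subtype.ext (funext fun j => (hωp j).symm.trans (hωq j)))
  rw [hdecomp, measure_iUnion hdisj hmeas']
  have : (fun p : {q : Fin (k+1) → ℤ // q (Fin.last k) = m} =>
      P {ω | ∀ j : Fin (k+1), S j ω = p.1 j})
      = fun p => ENNReal.ofReal (wt α k p.1) := funext fun p => cylP p.1
  rw [this]
  have hsub := tsum_subtype {q : Fin (k+1) → ℤ | q (Fin.last k) = m}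
    (fun q => ENNReal.ofReal (wt α k q))
  refine hsub.trans ?_
  rw [← tsum_wt h0 h1 k m]
  apply tsum_congr
  intro q
  rw [Set.indicator_apply]
  rfl

lemma F_rel {α : ℝ} (k : ℕ) :
    ∀ m : ℤ, (0 < m → F α k m = α * (F (1/2) k m + F (1/2) k (-m))) ∧
      (m < 0 → F α k m = (1-α) * (F (1/2) k m + F (1/2) k (-m))) ∧
      (m = 0 → F α k m = F (1/2) k m) := by
  induction k with
  | zero =>
    intro m
    refine ⟨fun hm => ?_, fun hm => ?_, fun hm => ?_⟩
    · simp only [F]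
      rw [if_neg (show ¬ m = 0 by omega), if_neg (show ¬ -m = 0 by omega)]
      ring
    · simp only [F]
      rw [if_neg (show ¬ m = 0 by omega), if_neg (show ¬ -m = 0 by omega)]
      ring
    · subst hm; rfl
  | succ k ih =>
    intro m
    have hclean : ((1:ℝ) - 1/2) = 1/2 := by norm_num
    refine ⟨fun hm => ?_, fun hm => ?_, fun hm => ?_⟩
    · -- 0 < m
      rcases eq_or_lt_of_le (show (1:ℤ) ≤ m by omega) with h1 | h2
      · obtain rfl : m = 1 := h1.symm
        simp only [F, hclean, ite_self]
        rw [if_pos (show (1:ℤ) - 1 = 0 by decide), if_neg (show ¬ (1:ℤ) + 1 = 0 by decide)]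
        rw [show (1:ℤ) - 1 = 0 by decide, show (1:ℤ) + 1 = 2 by decide,
          show (-1:ℤ) - 1 = -2 by decide, show (-1:ℤ) + 1 = 0 by decide]
        rw [(ih 0).2.2 rfl, (ih 2).1 (by norm_num)]
        ring
      · have hm1 : (0:ℤ) < m - 1 := by omega
        simp only [F, hclean, ite_self]
        rw [if_neg (show ¬ m - 1 = 0 by omega), if_neg (show ¬ m + 1 = 0 by omega)]
        rw [(ih (m-1)).1 hm1, (ih (m+1)).1 (by omega)]
        rw [show -m - 1 = -(m+1) from by ring, show -m + 1 = -(m-1) from by ring]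
        ring
    · -- m < 0
      rcases eq_or_lt_of_le (show m ≤ -1 by omega) with h1 | h2
      · obtain rfl : m = -1 := h1
        simp only [F, hclean, ite_self]
        rw [if_neg (show ¬ (-1:ℤ) - 1 = 0 by decide), if_pos (show (-1:ℤ) + 1 = 0 by decide)]
        rw [show (-1:ℤ) - 1 = -2 by decide, show (-1:ℤ) + 1 = 0 by decide,
          show -(-1:ℤ) = 1 by decide, show (1:ℤ) - 1 = 0 by decide,
          show (1:ℤ) + 1 = 2 by decide]
        rw [(ih 0).2.2 rfl, (ih (-2)).2.1 (by norm_num)]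
        rw [show -(-2:ℤ) = 2 by decide]
        ring
      · have hm1 : m + 1 < 0 := by omega
        simp only [F, hclean, ite_self]
        rw [if_neg (show ¬ m - 1 = 0 by omega), if_neg (show ¬ m + 1 = 0 by omega)]
        rw [(ih (m-1)).2.1 (by omega), (ih (m+1)).2.1 hm1]
        rw [show -m - 1 = -(m+1) from by ring, show -m + 1 = -(m-1) from by ring]
        ring
    · obtain rfl : m = 0 := hm
      simp only [F, hclean, ite_self]
      rw [if_neg (show ¬ (0:ℤ) - 1 = 0 by decide), if_neg (show ¬ (0:ℤ) + 1 = 0 by decide)]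
      rw [show (0:ℤ) - 1 = -1 by decide, show (0:ℤ) + 1 = 1 by decide]
      rw [(ih 1).1 one_pos, (ih (-1)).2.1 (by norm_num)]
      rw [show -(-1:ℤ) = 1 by decide, show -(1:ℤ) = -1 by decide]
      ring

theorem skew_nstep_distribution {Ω Ω' : Type*} [MeasurableSpace Ω] [MeasurableSpace Ω']
    (P : Measure Ω) (P' : Measure Ω') (Sα : ℕ → Ω → ℤ) (S : ℕ → Ω' → ℤ)
    (α : ℝ) (hα : α ∈ Set.Ioo (0 : ℝ) 1)
    (hSα : IsSkewRW α P Sα) (hS : IsSkewRW (1/2) P' S) (k : ℕ) (m : ℤ) :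
    (0 < m → P {ω | Sα k ω = m} = ENNReal.ofReal α * P' {ω | |S k ω| = m}) ∧
    (m < 0 → P {ω | Sα k ω = m} = ENNReal.ofReal (1 - α) * P' {ω | |S k ω| = -m}) ∧
    (m = 0 → P {ω | Sα k ω = m} = P' {ω | S k ω = 0}) := by
  obtain ⟨hα0, hα1⟩ := hα
  have h0 : (0:ℝ) ≤ α := le_of_lt hα0
  have h1 : α ≤ 1 := le_of_lt hα1
  have hhalf0 : (0:ℝ) ≤ 1/2 := by norm_num
  have hhalf1 : (1:ℝ)/2 ≤ 1 := by norm_num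
  have hA := skew_measure h0 h1 hSα k
  have hB := skew_measure hhalf0 hhalf1 hS k
  have habs : ∀ m' : ℤ, 0 < m' → P' {ω | |S k ω| = m'}
      = ENNReal.ofReal (F (1/2) k m') + ENNReal.ofReal (F (1/2) k (-m')) := by
    intro m' hm'
    have hsplit : {ω | |S k ω| = m'} = {ω | S k ω = m'} ∪ {ω | S k ω = -m'} := by
      ext ω
      simp only [Set.mem_setOf_eq, Set.mem_union]
      exact abs_eq (le_of_lt hm')
    have hmeas2 : MeasurableSet {ω | S k ω = -m'} :=
      hS.2.1 k (measurableSet_singleton (-m'))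
    have hd : Disjoint {ω | S k ω = m'} {ω | S k ω = -m'} := by
      rw [Set.disjoint_left]
      intro ω hω1 hω2
      simp only [Set.mem_setOf_eq] at hω1 hω2
      omega
    rw [hsplit, measure_union hd hmeas2, hB m', hB (-m')]
  refine ⟨fun hm => ?_, fun hm => ?_, fun hm => ?_⟩
  · rw [hA m, habs m hm, (F_rel k m).1 hm, ENNReal.ofReal_mul h0,
      ENNReal.ofReal_add (F_nonneg hhalf0 hhalf1 k m) (F_nonneg hhalf0 hhalf1 k (-m))]
  · rw [hA m, habs (-m) (by omega), (F_rel k m).2.1 hm,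
      ENNReal.ofReal_mul (show (0:ℝ) ≤ 1 - α by linarith), neg_neg,
      ENNReal.ofReal_add (F_nonneg hhalf0 hhalf1 k m) (F_nonneg hhalf0 hhalf1 k (-m))]
    ring
  · rw [hA m, hm, (F_rel k 0).2.2 rfl, ← hB 0]
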